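/- Let (X,T) be a minimal system. Then (X,T) is strongly F_ip-sensitive if and only if there is δ > 0 such that for every nonempty open subset U of X there exist x ∈ U and y ∈ X with d(x,y) > δ and x strongly proximal to y. -/

import Mathlib

open Hindman Filter Topology

/-- The (infinite) IP-set generated by a sequence `p : ℕ → ℕ`. -/
def FSinf (p : ℕ → ℕ) : Set ℕ :=
  {m : ℕ | ∃ α : Finset ℕ, α.Nonempty ∧ m = ∑ i ∈ α, p i}

/-- `x` is strongly proximal to `y` if `(y,y)` lies in the ω-limit set of `(x,y)`
under `T × T`. -/
def StronglyProximal {X : Type*} [MetricSpace X] (T : X → X) (x y : X) : Prop :=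
  ∀ ε > (0 : ℝ), ∀ N : ℕ, ∃ n ≥ N, dist (T^[n] x) y < ε ∧ dist (T^[n] y) y < ε


lemma fs_rep {a : Stream' ℕ} {m : ℕ} (hm : m ∈ FS a) :
    ∃ α : Finset ℕ, α.Nonempty ∧ m = ∑ i ∈ α, a.get i := by
  induction hm with
  | head' b => exact ⟨{0}, Finset.singleton_nonempty 0, by rw [Finset.sum_singleton]⟩
  | tail' b m h ih =>
    obtain ⟨α, hne, rfl⟩ := ih
    refine ⟨α.image (· + 1), hne.image _, ?_⟩
    rw [Finset.sum_image (by intro a _ b _ h; simp only at h; omega)]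
    exact Finset.sum_congr rfl fun i _ => (Stream'.get_tail).symm
  | cons' b m h ih =>
    obtain ⟨α, hne, rfl⟩ := ih
    refine ⟨insert 0 (α.image (· + 1)), Finset.insert_nonempty _ _, ?_⟩
    rw [Finset.sum_insert (by simp), Finset.sum_image (by intro a _ b _ h; simp only at h; omega)]
    have : b.head = b.get 0 := rfl
    rw [this]
    exact congrArg (b.get 0 + ·) (Finset.sum_congr rfl fun i _ => (Stream'.get_tail).symm)

lemma key {Y : Type*} [MetricSpace Y] [CompactSpace Y] {S : Y → Y} (hS : Continuous S)
    (w : Y) {K : Set Y} (hK : IsClosed K) (a0 : Stream' ℕ)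
    (hmem : ∀ n ∈ FS a0, S^[n] w ∈ K) (hpos : ∀ n ∈ FS a0, 0 < n) :
    ∃ y ∈ K, ∀ ε > (0:ℝ), ∀ N : ℕ, ∃ n ≥ N, dist (S^[n] w) y < ε ∧ dist (S^[n] y) y < ε := by
  have step0 : ∀ (k : ℕ) (b : Stream' ℕ),
      ∃ (b' : Stream' ℕ) (m : ℕ) (c : Y), FS b ⊆ FS a0 → FS b' ⊆ FS b ∧ m ∈ FS b ∧ k ≤ m ∧
        (∀ m' ∈ FS b', m + m' ∈ FS b) ∧
        (∀ n ∈ FS b', dist (S^[n] w) c ≤ (1/2 : ℝ)^k) := by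
    intro k b
    by_cases hb : FS b ⊆ FS a0
    case neg => exact ⟨b, 0, w, fun h => absurd h hb⟩
    have hmFS : (∑ i ∈ Finset.range (k+1), b.get i) ∈ FS b :=
      FS.finset_sum b _ (Finset.nonempty_range_iff.mpr (Nat.succ_ne_zero k))
    set m := ∑ i ∈ Finset.range (k+1), b.get i with hmdef
    have hmk : k ≤ m := by
      have h1 : ∑ i ∈ Finset.range (k+1), 1 ≤ m :=
        Finset.sum_le_sum fun i _ => hpos _ (hb (FS.singleton b i))
      simpa using h1.trans' (by simp)
    obtain ⟨d, hd⟩ := FS.add hmFS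
    obtain ⟨t, htf, htc⟩ := (Metric.totallyBounded_iff.mp
      (isCompact_univ : IsCompact (Set.univ : Set Y)).totallyBounded) ((1/2 : ℝ)^k) (by positivity)
    set cover : Set (Set ℕ) :=
      (fun c => {n : ℕ | S^[n] w ∈ Metric.ball c ((1/2 : ℝ)^k)} ∩ FS (Stream'.drop d b)) '' t
      with hcoverdef
    have hcf : cover.Finite := htf.image _
    have hcov : FS (Stream'.drop d b) ⊆ ⋃₀ cover := by
      intro n hn
      have := htc (Set.mem_univ (S^[n] w))
      simp only [Set.mem_iUnion] at this
      obtain ⟨c, hc, hcb⟩ := this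
      exact ⟨_, Set.mem_image_of_mem _ hc, hcb, hn⟩
    obtain ⟨cell, hcell, b', hb'⟩ := FS_partition_regular _ cover hcf hcov
    obtain ⟨c, hct, rfl⟩ := hcell
    have hsub : FS b' ⊆ FS (Stream'.drop d b) := fun n hn => (hb' hn).2
    exact ⟨b', m, c, fun _ => ⟨fun n hn => FS_iter_tail_sub_FS b d (hsub hn), hmFS, hmk,
      fun m' hm' => hd m' (hsub hm'), fun n hn => le_of_lt (hb' hn).1⟩⟩
  choose bnext mfun cfun hprop using step0
  have hsub1 : ∀ k b, FS b ⊆ FS a0 → FS (bnext k b) ⊆ FS b := fun k b h => ((hprop k b) h).1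
  have hmem1 : ∀ k b, FS b ⊆ FS a0 → mfun k b ∈ FS b := fun k b h => ((hprop k b) h).2.1
  have hge1 : ∀ k b, FS b ⊆ FS a0 → k ≤ mfun k b := fun k b h => ((hprop k b) h).2.2.1
  have hadd1 : ∀ k b, FS b ⊆ FS a0 → ∀ m' ∈ FS (bnext k b), mfun k b + m' ∈ FS b :=
    fun k b h => ((hprop k b) h).2.2.2.1
  have hball1 : ∀ k b, FS b ⊆ FS a0 → ∀ n ∈ FS (bnext k b), dist (S^[n] w) (cfun k b) ≤ (1/2:ℝ)^k :=
    fun k b h => ((hprop k b) h).2.2.2.2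
  set B : ℕ → Stream' ℕ := fun k => Nat.rec a0 (fun k bk => bnext k bk) k with hBdef
  have hBa : ∀ k, FS (B k) ⊆ FS a0 := by
    intro k
    induction k with
    | zero => exact subset_rfl
    | succ k ih => exact (hsub1 k (B k) ih).trans ih
  set m : ℕ → ℕ := fun k => mfun k (B k) with hmdef
  set c : ℕ → Y := fun k => cfun k (B k) with hcdef
  have hmm : ∀ k, m k ∈ FS (B k) := fun k => hmem1 k (B k) (hBa k)
  have hge : ∀ k, k ≤ m k := fun k => hge1 k (B k) (hBa k)
  have hadd : ∀ k, ∀ m' ∈ FS (B (k+1)), m k + m' ∈ FS (B k) :=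
    fun k => hadd1 k (B k) (hBa k)
  have hball : ∀ k, ∀ n ∈ FS (B (k+1)), dist (S^[n] w) (c k) ≤ (1/2 : ℝ)^k :=
    fun k => hball1 k (B k) (hBa k)
  have hstep : ∀ k, FS (B (k+1)) ⊆ FS (B k) := fun k => hsub1 k (B k) (hBa k)
  have hmono : ∀ j k, j ≤ k → FS (B k) ⊆ FS (B j) := by
    intro j k hjk
    induction k, hjk using Nat.le_induction with
    | base => exact subset_rfl
    | succ k hk ih => exact (hstep k).trans ih
  set u : ℕ → Y := fun k => S^[m k] w with hudef
  have hukball : ∀ j k, j < k → dist (u k) (c j) ≤ (1/2 : ℝ)^j :=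
    fun j k hjk => hball j _ (hmono (j+1) k hjk (hmm k))
  have hhalf : ∀ j₀ j : ℕ, j₀ ≤ j → ((1:ℝ)/2)^j ≤ (1/2)^j₀ :=
    fun j₀ j h => pow_le_pow_of_le_one (by norm_num) (by norm_num) h
  have hcauchy : CauchySeq u := by
    rw [Metric.cauchySeq_iff]
    intro ε hε
    obtain ⟨k₀, hk₀⟩ := exists_pow_lt_of_lt_one (show (0:ℝ) < ε/2 by linarith)
      (show (1:ℝ)/2 < 1 by norm_num)
    refine ⟨k₀ + 1, fun k hk k' hk' => ?_⟩
    have h1 := hukball k₀ k hk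
    have h2 := hukball k₀ k' hk'
    calc dist (u k) (u k') ≤ dist (u k) (c k₀) + dist (c k₀) (u k') := dist_triangle _ _ _
      _ ≤ (1/2:ℝ)^k₀ + (1/2)^k₀ := by rw [dist_comm (c k₀)]; exact add_le_add h1 h2
      _ < ε := by linarith
  obtain ⟨y, hy⟩ := cauchySeq_tendsto_of_complete hcauchy
  have hyK : y ∈ K := hK.mem_of_tendsto hy
    (Filter.Eventually.of_forall fun k => hmem _ (hBa k (hmm k)))
  have hcy : ∀ j, dist (c j) y ≤ (1/2 : ℝ)^j := by
    intro j
    refine le_of_tendsto (tendsto_const_nhds.dist hy) ?_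
    filter_upwards [Filter.eventually_ge_atTop (j+1)] with k hk
    rw [dist_comm]
    exact hukball j k hk
  have hA : ∀ k, 1 ≤ k → dist (u k) y ≤ (1/2 : ℝ)^(k-1) * 2 := by
    intro k hk
    have hlt : k - 1 < k := Nat.sub_lt hk one_pos
    calc dist (u k) y ≤ dist (u k) (c (k-1)) + dist (c (k-1)) y := dist_triangle _ _ _
      _ ≤ (1/2:ℝ)^(k-1) + (1/2)^(k-1) := add_le_add (hukball _ _ hlt) (hcy _)
      _ = (1/2:ℝ)^(k-1) * 2 := by ring
  have hB2 : ∀ k, 1 ≤ k → dist (S^[m k] y) y ≤ (1/2 : ℝ)^(k-1) * 2 := by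
    intro k hk
    have h1 : Tendsto (fun k' => S^[m k + m k'] w) atTop (𝓝 (S^[m k] y)) := by
      have hc : Tendsto (fun k' => S^[m k] (u k')) atTop (𝓝 (S^[m k] y)) :=
        ((hS.iterate (m k)).tendsto y).comp hy
      convert hc using 2 with k'
      exact Function.iterate_add_apply S (m k) (m k') w
    have h2 : ∀ᶠ k' in atTop, dist (S^[m k + m k'] w) (c (k-1)) ≤ (1/2:ℝ)^(k-1) := by
      filter_upwards [Filter.eventually_ge_atTop (k+1)] with k' hk'
      have hmem' : m k + m k' ∈ FS (B k) :=
        hadd k (m k') (hmono (k+1) k' hk' (hmm k'))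
      have hkk : k - 1 + 1 = k := Nat.succ_pred_eq_of_pos hk
      have := hball (k-1)
      rw [hkk] at this
      exact this _ hmem'
    have h3 : dist (S^[m k] y) (c (k-1)) ≤ (1/2:ℝ)^(k-1) :=
      le_of_tendsto (h1.dist tendsto_const_nhds) h2
    calc dist (S^[m k] y) y ≤ dist (S^[m k] y) (c (k-1)) + dist (c (k-1)) y :=
        dist_triangle _ _ _
      _ ≤ (1/2:ℝ)^(k-1) + (1/2)^(k-1) := add_le_add h3 (hcy _)
      _ = (1/2:ℝ)^(k-1) * 2 := by ring
  refine ⟨y, hyK, ?_⟩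
  intro ε hε N
  obtain ⟨k₀, hk₀⟩ := exists_pow_lt_of_lt_one (show (0:ℝ) < ε/2 by linarith)
    (show (1:ℝ)/2 < 1 by norm_num)
  set k := max (k₀ + 1) (max N 1) with hkdef
  have hk1 : 1 ≤ k := le_trans (le_max_right N 1) (le_max_right _ _)
  have hkN : N ≤ k := le_trans (le_max_left N 1) (le_max_right _ _)
  have hkk₀ : k₀ ≤ k - 1 := by omega
  have hpow : ((1:ℝ)/2)^(k-1) * 2 < ε := by
    have := hhalf k₀ (k-1) hkk₀
    linarith
  exact ⟨m k, hkN.trans (hge k), lt_of_le_of_lt (hA k hk1) hpow,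
    lt_of_le_of_lt (hB2 k hk1) hpow⟩

lemma sp_ip {X : Type*} [MetricSpace X] {T : X → X} (hT : Continuous T) {x y : X}
    (h : StronglyProximal T x y) {ε : ℝ} (hε : 0 < ε) :
    ∃ q : ℕ → ℕ, (∀ i, 0 < q i) ∧
      ∀ n ∈ FSinf q, dist (T^[n] x) y < ε ∧ dist (T^[n] y) y < ε := by
  classical
  set Good : List ℕ → Prop := fun l =>
    (∀ i ∈ l, 0 < i) ∧
    ∀ α : Finset ℕ, α.Nonempty → (∀ i ∈ α, i < l.length) →
      dist (T^[∑ i ∈ α, l.getD i 0] x) y < ε * (1 - (1/2)^l.length) ∧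
      dist (T^[∑ i ∈ α, l.getD i 0] y) y < ε * (1 - (1/2)^l.length) with hGooddef
  have hpowpos : ∀ k : ℕ, (0:ℝ) < (1/2)^k := fun k => by positivity
  have hpowle : ∀ k : ℕ, ((1:ℝ)/2)^(k+1) ≤ (1/2)^k := fun k =>
    pow_le_pow_of_le_one (by norm_num) (by norm_num) (Nat.le_succ k)
  have step : ∀ l, Good l → ∃ n, 0 < n ∧ Good (l ++ [n]) := by
    intro l hGl
    obtain ⟨hlp, hl⟩ := hGl
    set k := l.length with hkdef
    set M := ∑ i ∈ Finset.range k, l.getD i 0 with hMdef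
    have hG : ContinuousAt (fun z (j : Fin (M+1)) => T^[j.1] z) y :=
      (continuous_pi fun j : Fin (M+1) => hT.iterate j.1).continuousAt
    obtain ⟨γ, hγ0, hγ⟩ := Metric.continuousAt_iff.mp hG (ε * (1/2)^(k+1)) (by positivity)
    set γ' := min γ (ε * (1/2)^(k+1)) with hγ'def
    have hγ'pos : 0 < γ' := lt_min hγ0 (by positivity)
    obtain ⟨n, hn1, hnx, hny⟩ := h γ' hγ'pos 1
    have hgetl : ∀ i < k, (l ++ [n]).getD i 0 = l.getD i 0 := fun i hi =>
      List.getD_append l [n] 0 i hi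
    have hgetk : (l ++ [n]).getD k 0 = n := by
      rw [List.getD_append_right l [n] 0 k (le_of_eq hkdef.symm)]
      simp [hkdef]
    have hlen : (l ++ [n]).length = k + 1 := by simp [hkdef]
    have main : ∀ w : X, dist (T^[n] w) y < γ' →
        (∀ α : Finset ℕ, α.Nonempty → (∀ i ∈ α, i < k) →
          dist (T^[∑ i ∈ α, l.getD i 0] w) y < ε * (1 - (1/2)^k)) →
        ∀ α : Finset ℕ, α.Nonempty → (∀ i ∈ α, i < k + 1) →
          dist (T^[∑ i ∈ α, (l ++ [n]).getD i 0] w) y < ε * (1 - (1/2)^(k+1)) := by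
      intro w hw hprev α hαne hαlt
      by_cases hkα : k ∈ α
      · have hsplit : ∑ i ∈ α, (l ++ [n]).getD i 0
            = (∑ i ∈ α.erase k, l.getD i 0) + n := by
          rw [← Finset.add_sum_erase _ _ hkα, hgetk, add_comm]
          congr 1
          refine Finset.sum_congr rfl fun i hi => ?_
          have hik : i ≠ k := Finset.ne_of_mem_erase hi
          have : i < k + 1 := hαlt i (Finset.mem_of_mem_erase hi)
          exact hgetl i (by omega)
        rw [hsplit, Function.iterate_add_apply]
        rcases (α.erase k).eq_empty_or_nonempty with hβ | hβ
        · rw [hβ]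
          simp only [Finset.sum_empty, Function.iterate_zero_apply]
          have h1 : γ' ≤ ε * (1/2)^(k+1) := min_le_right _ _
          have h2 : ((1:ℝ)/2)^(k+1) ≤ 1/2 := by
            calc ((1:ℝ)/2)^(k+1) ≤ (1/2)^1 :=
              pow_le_pow_of_le_one (by norm_num) (by norm_num) (by omega)
            _ = 1/2 := by norm_num
          nlinarith [hpowpos (k+1)]
        · have hβk : ∀ i ∈ α.erase k, i < k := fun i hi => by
            have h1 := hαlt i (Finset.mem_of_mem_erase hi)
            have h2 := Finset.ne_of_mem_erase hi
            omega
          have hβM : (∑ i ∈ α.erase k, l.getD i 0) ≤ M := by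
            refine Finset.sum_le_sum_of_subset fun i hi => ?_
            exact Finset.mem_range.mpr (hβk i hi)
          set j := ∑ i ∈ α.erase k, l.getD i 0 with hjdef
          have hjy : dist (T^[j] (T^[n] w)) (T^[j] y) < ε * (1/2)^(k+1) := by
            have hdist := hγ (show dist (T^[n] w) y < γ from
              lt_of_lt_of_le hw (min_le_left _ _))
            have hpi := dist_le_pi_dist (fun jj : Fin (M+1) => T^[jj.1] (T^[n] w))
              (fun jj : Fin (M+1) => T^[jj.1] y) ⟨j, by omega⟩
            exact lt_of_le_of_lt hpi hdist
          have hjy2 : dist (T^[j] y) y < ε * (1 - (1/2)^k) := (hl _ hβ hβk).2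
          have htri := dist_triangle (T^[j] (T^[n] w)) (T^[j] y) y
          have hks : ε * (1/2)^(k+1) + ε * (1 - (1/2)^k) = ε * (1 - (1/2)^(k+1)) := by
            rw [pow_succ]
            ring
          linarith
      · have hαk : ∀ i ∈ α, i < k := fun i hi => by
          have h1 := hαlt i hi
          have h2 : i ≠ k := fun hik => hkα (hik ▸ hi)
          omega
        have hsum : ∑ i ∈ α, (l ++ [n]).getD i 0 = ∑ i ∈ α, l.getD i 0 :=
          Finset.sum_congr rfl fun i hi => hgetl i (hαk i hi)
        rw [hsum]
        refine lt_of_lt_of_le (hprev α hαne hαk) ?_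
        have := hpowle k
        nlinarith
    refine ⟨n, hn1, ?_, ?_⟩
    · intro i hi
      rcases List.mem_append.mp hi with h1 | h1
      · exact hlp i h1
      · simp only [List.mem_singleton] at h1
        omega
    · intro α hαne hαlt
      rw [hlen] at hαlt
      rw [hlen]
      exact ⟨main x hnx (fun β hβne hβlt => (hl β hβne hβlt).1) α hαne hαlt,
        main y hny (fun β hβne hβlt => (hl β hβne hβlt).2) α hαne hαlt⟩
  -- the recursion
  have hrec : ∃ L : ℕ → List ℕ, (∀ k, (L k).length = k) ∧ (∀ k, Good (L k)) ∧
      (∀ k, ∃ n, L (k+1) = L k ++ [n]) := by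
    classical
    refine ⟨fun k => Nat.rec []
      (fun _ lk => lk ++ [if hgl : ∃ n, 0 < n ∧ Good (lk ++ [n]) then hgl.choose else 1]) k,
      ?_, ?_, ?_⟩
    · intro k
      induction k with
      | zero => rfl
      | succ k ih => simpa using ih
    · intro k
      induction k with
      | zero =>
        refine ⟨fun i hi => absurd hi List.not_mem_nil, fun α hαne hαlt => ?_⟩
        obtain ⟨i, hi⟩ := hαne
        exact absurd (hαlt i hi) (by simp [List.length])
      | succ k ih =>
        have hex : ∃ n, 0 < n ∧ Good (Nat.rec ([] : List ℕ)
            (fun _ lk => lk ++ [if hgl : ∃ n, 0 < n ∧ Good (lk ++ [n]) then hgl.choose else 1])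
            k ++ [n]) := step _ ih
        show Good (_ ++ [_])
        rw [dif_pos hex]
        exact hex.choose_spec.2
    · intro k
      exact ⟨_, rfl⟩
  obtain ⟨L, hlen, hGood, hext⟩ := hrec
  have hstable : ∀ i k, i < k → (L k).getD i 0 = (L (i+1)).getD i 0 := by
    intro i k
    induction k with
    | zero => omega
    | succ k ih =>
      intro hik
      rcases Nat.lt_or_ge i k with h1 | h1
      · obtain ⟨n, hn⟩ := hext k
        rw [hn, List.getD_append _ _ _ _ (by rw [hlen]; exact h1)]
        exact ih h1
      · have : i = k := by omega
        subst this
        rfl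
  refine ⟨fun i => (L (i+1)).getD i 0, ?_, ?_⟩
  · intro i
    show 0 < (L (i+1)).getD i 0
    have hi : i < (L (i+1)).length := by rw [hlen]; omega
    have hget : (L (i+1)).getD i 0 = (L (i+1))[i] := List.getD_eq_getElem _ _ hi
    rw [hget]
    exact (hGood (i+1)).1 _ (List.getElem_mem hi)
  · rintro n ⟨α, hαne, rfl⟩
    show dist (T^[∑ i ∈ α, (L (i+1)).getD i 0] x) y < ε ∧
      dist (T^[∑ i ∈ α, (L (i+1)).getD i 0] y) y < ε
    have hαk : ∀ i ∈ α, i < α.sup id + 1 := fun i hi => by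
      have := Finset.le_sup (f := id) hi
      simp only [id] at this
      omega
    have hsum : ∑ i ∈ α, (L (i+1)).getD i 0 = ∑ i ∈ α, (L (α.sup id + 1)).getD i 0 :=
      Finset.sum_congr rfl fun i hi => (hstable i _ (hαk i hi)).symm
    have hbound := (hGood (α.sup id + 1)).2 α hαne (by rw [hlen]; exact hαk)
    rw [hlen] at hbound
    have hfin : ε * (1 - (1/2)^(α.sup id + 1)) < ε := by
      have := hpowpos (α.sup id + 1)
      nlinarith
    rw [hsum]
    exact ⟨lt_trans hbound.1 hfin, lt_trans hbound.2 hfin⟩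


lemma iter_pair {X : Type*} (T : X → X) (n : ℕ) (q : X × X) :
    (fun r : X × X => (T r.1, T r.2))^[n] q = (T^[n] q.1, T^[n] q.2) := by
  induction n generalizing q with
  | zero => rfl
  | succ n ih =>
    rw [Function.iterate_succ_apply, Function.iterate_succ_apply,
      Function.iterate_succ_apply, ih]

/-- A minimal system is strongly `F_ip`-sensitive iff there is `δ > 0` such that every
nonempty open set contains a point `x` which is strongly proximal to some point `y` with
`d(x,y) > δ`. -/
theorem strong_Fip_sensitive_iff_strongly_proximal {X : Type*} [MetricSpace X]
    [CompactSpace X] (T : X → X) (hT : Continuous T) (hTs : Function.Surjective T)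
    (hmin : ∀ x : X, Dense (Set.range fun n : ℕ => T^[n] x)) :
    (∃ δ > (0 : ℝ), ∀ U : Set X, IsOpen U → U.Nonempty →
        ∃ x ∈ U, ∃ z ∈ U, ∃ p : ℕ → ℕ, (∀ i, 0 < p i) ∧
          FSinf p ⊆ {n : ℕ | δ < dist (T^[n] x) (T^[n] z)}) ↔
      (∃ δ > (0 : ℝ), ∀ U : Set X, IsOpen U → U.Nonempty →
        ∃ x ∈ U, ∃ y : X, δ < dist x y ∧ StronglyProximal T x y) := by
  constructor
  · rintro ⟨δ, hδ, hsen⟩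
    refine ⟨δ/4, by linarith, ?_⟩
    rintro U hU ⟨u₀, hu₀⟩
    obtain ⟨r, hr0, hrU⟩ := Metric.isOpen_iff.mp hU u₀ hu₀
    have hr'0 : 0 < min r (δ/8) := lt_min hr0 (by linarith)
    obtain ⟨x, hx, z, hz, p, hp, hFS⟩ := hsen (Metric.ball u₀ (min r (δ/8)))
      Metric.isOpen_ball ⟨u₀, Metric.mem_ball_self hr'0⟩
    have hxU : x ∈ U := hrU (Metric.ball_subset_ball (min_le_left _ _) hx)
    have hzU : z ∈ U := hrU (Metric.ball_subset_ball (min_le_left _ _) hz)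
    have hxz : dist x z < δ/4 := by
      have h1 : dist x u₀ < min r (δ/8) := Metric.mem_ball.mp hx
      have h2 : dist z u₀ < min r (δ/8) := Metric.mem_ball.mp hz
      have h3 : min r (δ/8) ≤ δ/8 := min_le_right _ _
      have h4 := dist_triangle x u₀ z
      rw [dist_comm u₀ z] at h4
      linarith
    set S : X × X → X × X := fun r => (T r.1, T r.2) with hSdef
    have hS : Continuous S := (hT.comp continuous_fst).prodMk (hT.comp continuous_snd)
    have hK : IsClosed {q : X × X | δ ≤ dist q.1 q.2} :=
      isClosed_le continuous_const (continuous_fst.dist continuous_snd)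
    have hmemK : ∀ n ∈ Hindman.FS (p : Stream' ℕ), S^[n] (x, z) ∈ {q : X × X | δ ≤ dist q.1 q.2} := by
      intro n hn
      obtain ⟨α, hne, rfl⟩ := fs_rep hn
      have hmem : (∑ i ∈ α, p i) ∈ FSinf p := ⟨α, hne, rfl⟩
      have h2 := hFS hmem
      rw [iter_pair]
      simp only [Set.mem_setOf_eq]
      exact le_of_lt h2
    have hposFS : ∀ n ∈ Hindman.FS (p : Stream' ℕ), 0 < n := by
      intro n hn
      obtain ⟨α, hne, rfl⟩ := fs_rep hn
      exact Finset.sum_pos (fun i _ => hp i) hne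
    obtain ⟨⟨u, v⟩, hKuv, hSP⟩ := key hS (x, z) hK (p : Stream' ℕ) hmemK hposFS
    have hspx : StronglyProximal T x u := by
      intro ε hε N
      obtain ⟨n, hn, h1, h2⟩ := hSP ε hε N
      rw [iter_pair] at h1 h2
      rw [Prod.dist_eq] at h1 h2
      exact ⟨n, hn, le_sup_left.trans_lt h1, le_sup_left.trans_lt h2⟩
    have hspz : StronglyProximal T z v := by
      intro ε hε N
      obtain ⟨n, hn, h1, h2⟩ := hSP ε hε N
      rw [iter_pair] at h1 h2
      rw [Prod.dist_eq] at h1 h2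
      exact ⟨n, hn, le_sup_right.trans_lt h1, le_sup_right.trans_lt h2⟩
    have hduv : δ ≤ dist u v := hKuv
    by_cases hcase : δ/4 < dist x u
    · exact ⟨x, hxU, u, hcase, hspx⟩
    · push_neg at hcase
      refine ⟨z, hzU, v, ?_, hspz⟩
      have h4 := dist_triangle4 u x z v
      rw [dist_comm u x] at h4
      linarith
  · rintro ⟨δ, hδ, hprox⟩
    refine ⟨δ/2, by linarith, ?_⟩
    intro U hU hUne
    obtain ⟨x, hxU, y, hdxy, hsp⟩ := hprox U hU hUne
    obtain ⟨ε₀, hε₀, hball⟩ := Metric.isOpen_iff.mp hU x hxU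
    have hr : 0 < min ε₀ (δ/4) := lt_min hε₀ (by linarith)
    obtain ⟨z', ⟨k, hk⟩, hz'⟩ := (hmin y).exists_mem_open Metric.isOpen_ball
      (⟨x, Metric.mem_ball_self (half_pos hr)⟩ : (Metric.ball x (min ε₀ (δ/4) / 2)).Nonempty)
    have hky : dist (T^[k] y) x < min ε₀ (δ/4) / 2 := by
      have hk' : T^[k] y = z' := hk
      rw [hk']; exact Metric.mem_ball.mp hz'
    obtain ⟨γ, hγ0, hγ⟩ := Metric.continuousAt_iff.mp (hT.iterate k).continuousAt
      (min ε₀ (δ/4) / 2) (half_pos hr)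
    have hε : (0:ℝ) < min γ (δ/4) := lt_min hγ0 (by linarith)
    obtain ⟨q, hqpos, hq⟩ := sp_ip hT hsp hε
    have hzU : T^[k] y ∈ U := by
      refine hball (Metric.mem_ball.mpr ?_)
      have := min_le_left ε₀ (δ/4)
      linarith
    refine ⟨x, hxU, T^[k] y, hzU, q, hqpos, ?_⟩
    intro n hn
    obtain ⟨h1, h2⟩ := hq n hn
    have hcomm : T^[n] (T^[k] y) = T^[k] (T^[n] y) := by
      rw [← Function.iterate_add_apply, ← Function.iterate_add_apply, Nat.add_comm]
    have h3 : dist (T^[k] (T^[n] y)) (T^[k] y) < min ε₀ (δ/4) / 2 :=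
      hγ (lt_of_lt_of_le h2 (min_le_left _ _))
    have h4 : dist (T^[n] (T^[k] y)) x < min ε₀ (δ/4) := by
      have := dist_triangle (T^[n] (T^[k] y)) (T^[k] y) x
      rw [hcomm]
      rw [hcomm] at this
      linarith
    have h5 := dist_triangle4 y (T^[n] x) (T^[n] (T^[k] y)) x
    rw [dist_comm y (T^[n] x)] at h5
    rw [dist_comm x y] at hdxy
    have h6 : dist (T^[n] x) y < δ/4 := lt_of_lt_of_le h1 (min_le_right _ _)
    have h7 : min ε₀ (δ/4) ≤ δ/4 := min_le_right _ _
    show δ/2 < dist (T^[n] x) (T^[n] (T^[k] y))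
    linarith
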